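/- Let n ≥ 1 and let w ∈ S^B_n be a signed permutation. Then w globally contains the pattern 321 (there exist unfrozen integers i < j < k with w(i) > w(j) > w(k)) if and only if w classically contains at least one of the six patterns 1 −2, −1 −2, 3 2 1, 3 2 −1, −3 2 1, −3 2 −1. -/

import Mathlib

namespace Stmt15

/-- The Coxeter generator `sᵢ` of the hyperoctahedral group, acting on `ℤ`:
`s₀` swaps `-1` and `1`; for `i ≥ 1`, `sᵢ` swaps `i` with `i+1` and `-i` with `-(i+1)`. -/
def sB (i : ℕ) : Equiv.Perm ℤ :=
  if i = 0 then Equiv.swap (-1 : ℤ) 1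
  else Equiv.swap (i : ℤ) ((i : ℤ) + 1) * Equiv.swap (-(i : ℤ)) (-((i : ℤ) + 1))

/-- `w` is a signed permutation in `S^B_n`: a bijection of `ℤ` with
`w(-i) = -w(i)` for all `i` and `w(i) = i` whenever `|i| > n`. -/
def IsSignedPerm (n : ℕ) (w : Equiv.Perm ℤ) : Prop :=
  (∀ i : ℤ, w (-i) = -(w i)) ∧ ∀ i : ℤ, (n : ℤ) < |i| → w i = i

/-- `l` is a word for `w` in the letters `{0, …, n-1}`. -/
def IsWordB (n : ℕ) (w : Equiv.Perm ℤ) (l : List ℕ) : Prop :=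
  (∀ i ∈ l, i + 1 ≤ n) ∧ (l.map sB).prod = w

/-- The Coxeter length of `w`: the minimal length of a word for `w`. -/
noncomputable def lenB (n : ℕ) (w : Equiv.Perm ℤ) : ℕ :=
  sInf {m | ∃ l : List ℕ, IsWordB n w l ∧ l.length = m}

/-- The disarray `dis(w) = ∑_{i=1}^n |w(i) - i|`. -/
noncomputable def disB (n : ℕ) (w : Equiv.Perm ℤ) : ℤ :=
  ∑ i ∈ Finset.Icc (1 : ℤ) (n : ℤ), |w i - i|

/-- The unfrozen integers for `S^B_n` are `{-n, …, -1, 1, …, n}`. -/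
def Unfrozen (n : ℕ) (i : ℤ) : Prop := i ≠ 0 ∧ |i| ≤ (n : ℤ)

/-- `w` globally contains the pattern `321`: there are unfrozen integers
`i < j < k` with `w(i) > w(j) > w(k)`. -/
def GloballyContains321 (n : ℕ) (w : Equiv.Perm ℤ) : Prop :=
  ∃ i j k : ℤ, Unfrozen n i ∧ Unfrozen n j ∧ Unfrozen n k ∧
    i < j ∧ j < k ∧ w i > w j ∧ w j > w k

/-- `w` classically contains the pattern `p` (given by its window values
`p(1) ⋯ p(k)`, a list of nonzero integers): there are positions
`1 ≤ i₁ < ⋯ < i_k ≤ n` such that `|w(i₁)|, …, |w(i_k)|` is order-isomorphic to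
`|p(1)|, …, |p(k)|` and `w(i_j) · p(j) > 0` for all `j`. -/
def ClassicallyContains (n : ℕ) (w : Equiv.Perm ℤ) (p : List ℤ) : Prop :=
  ∃ f : Fin p.length → ℤ, StrictMono f ∧ (∀ a, 1 ≤ f a ∧ f a ≤ (n : ℤ)) ∧
    (∀ a b : Fin p.length, |w (f a)| < |w (f b)| ↔ |p.get a| < |p.get b|) ∧
    ∀ a : Fin p.length, 0 < w (f a) * p.get a

lemma wne0 {n : ℕ} {w : Equiv.Perm ℤ} (hw : IsSignedPerm n w) {i : ℤ} (hi : i ≠ 0) :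
    w i ≠ 0 := by
  intro h
  have h2 : w (-i) = w i := by rw [hw.1 i, h]; ring
  have := w.injective h2
  omega

lemma abs_ne {n : ℕ} {w : Equiv.Perm ℤ} (hw : IsSignedPerm n w) {a b : ℤ}
    (ha : 0 < a) (hb : 0 < b) (hab : a ≠ b) : |w a| ≠ |w b| := by
  intro h
  rcases abs_eq_abs.mp h with h' | h'
  · exact hab (w.injective h')
  · have h2 : w a = w (-b) := by rw [hw.1 b]; omega
    have := w.injective h2
    omega

lemma cc_two (n : ℕ) (w : Equiv.Perm ℤ) (p1 p2 : ℤ) (i j : ℤ)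
    (hi : 1 ≤ i) (hij : i < j) (hj : j ≤ (n:ℤ))
    (habs : |w i| < |w j|) (hp : |p1| < |p2|)
    (hs1 : 0 < w i * p1) (hs2 : 0 < w j * p2) :
    ClassicallyContains n w [p1, p2] := by
  refine ⟨![i, j], ?_, ?_, ?_, ?_⟩
  · intro a b hab
    fin_cases a <;> fin_cases b <;> simp_all <;> omega
  · intro a; fin_cases a <;> simp <;> omega
  · intro a b
    fin_cases a <;> fin_cases b <;>
      simp only [Matrix.cons_val_zero, Matrix.cons_val_one, Matrix.head_cons,
        List.get, Fin.isValue] <;>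
      constructor <;> intro h <;> simp_all <;> linarith
  · intro a; fin_cases a <;> simpa using by linarith

lemma cc_three (n : ℕ) (w : Equiv.Perm ℤ) (p1 p2 p3 : ℤ) (i j k : ℤ)
    (hi : 1 ≤ i) (hij : i < j) (hjk : j < k) (hk : k ≤ (n:ℤ))
    (h12 : |w j| < |w i|) (h23 : |w k| < |w j|)
    (hp12 : |p2| < |p1|) (hp23 : |p3| < |p2|)
    (hs1 : 0 < w i * p1) (hs2 : 0 < w j * p2) (hs3 : 0 < w k * p3) :
    ClassicallyContains n w [p1, p2, p3] := by
  refine ⟨![i, j, k], ?_, ?_, ?_, ?_⟩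
  · intro a b hab
    fin_cases a <;> fin_cases b <;> simp_all <;> omega
  · intro a; fin_cases a <;> simp <;> omega
  · intro a b
    fin_cases a <;> fin_cases b <;>
      simp only [Matrix.cons_val_zero, Matrix.cons_val_one, Matrix.head_cons,
        Matrix.cons_val_two, Matrix.tail_cons, List.get, Fin.isValue] <;>
      constructor <;> intro h <;> simp_all <;> linarith
  · intro a; fin_cases a <;> simpa using by linarith

lemma extract2 {n : ℕ} {w : Equiv.Perm ℤ} {p1 p2 : ℤ}
    (h : ClassicallyContains n w [p1, p2]) :
    ∃ i j : ℤ, 1 ≤ i ∧ i < j ∧ j ≤ (n : ℤ) ∧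
      (|w i| < |w j| ↔ |p1| < |p2|) ∧ 0 < w i * p1 ∧ 0 < w j * p2 := by
  obtain ⟨f, hmono, hbd, hiso, hsgn⟩ := h
  refine ⟨f ⟨0, by simp⟩, f ⟨1, by simp⟩, (hbd _).1,
    hmono (by simp [Fin.mk_lt_mk]), (hbd _).2, ?_, ?_, ?_⟩
  · simpa using hiso ⟨0, by simp⟩ ⟨1, by simp⟩
  · simpa using hsgn ⟨0, by simp⟩
  · simpa using hsgn ⟨1, by simp⟩

lemma extract3 {n : ℕ} {w : Equiv.Perm ℤ} {p1 p2 p3 : ℤ}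
    (h : ClassicallyContains n w [p1, p2, p3]) :
    ∃ i j k : ℤ, 1 ≤ i ∧ i < j ∧ j < k ∧ k ≤ (n : ℤ) ∧
      (|w i| < |w j| ↔ |p1| < |p2|) ∧ (|w j| < |w k| ↔ |p2| < |p3|) ∧
      (|w i| < |w k| ↔ |p1| < |p3|) ∧
      0 < w i * p1 ∧ 0 < w j * p2 ∧ 0 < w k * p3 := by
  obtain ⟨f, hmono, hbd, hiso, hsgn⟩ := h
  refine ⟨f ⟨0, by simp⟩, f ⟨1, by simp⟩, f ⟨2, by simp⟩, (hbd _).1,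
    hmono (by simp [Fin.mk_lt_mk]), hmono (by simp [Fin.mk_lt_mk]), (hbd _).2,
    ?_, ?_, ?_, ?_, ?_, ?_⟩
  · simpa using hiso ⟨0, by simp⟩ ⟨1, by simp⟩
  · simpa using hiso ⟨1, by simp⟩ ⟨2, by simp⟩
  · simpa using hiso ⟨0, by simp⟩ ⟨2, by simp⟩
  · simpa using hsgn ⟨0, by simp⟩
  · simpa using hsgn ⟨1, by simp⟩
  · simpa using hsgn ⟨2, by simp⟩

lemma sign_pos {x p : ℤ} (hp : 0 < p) (h : 0 < x * p) : 0 < x := by nlinarith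

lemma sign_neg {x p : ℤ} (hp : p < 0) (h : 0 < x * p) : x < 0 := by nlinarith

lemma backward {n : ℕ} {w : Equiv.Perm ℤ} (hw : IsSignedPerm n w)
    (h : ClassicallyContains n w [1, -2] ∨ ClassicallyContains n w [-1, -2] ∨
      ClassicallyContains n w [3, 2, 1] ∨ ClassicallyContains n w [3, 2, -1] ∨
      ClassicallyContains n w [-3, 2, 1] ∨ ClassicallyContains n w [-3, 2, -1]) :
    GloballyContains321 n w := by
  rcases h with h | h | h | h | h | h
  · -- [1,-2] : triple (-j, i, j)
    obtain ⟨i, j, hi, hij, hj, hiso, hs1, hs2⟩ := extract2 h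
    have ei : |i| = i := abs_of_pos (by omega)
    have ej : |j| = j := abs_of_pos (by omega)
    have hwi : 0 < w i := sign_pos (by norm_num) hs1
    have hwj : w j < 0 := sign_neg (by norm_num) hs2
    have habs : |w i| < |w j| := hiso.mpr (by norm_num)
    have e1 : |w i| = w i := abs_of_pos hwi
    have e2 : |w j| = -w j := abs_of_neg hwj
    exact ⟨-j, i, j, ⟨by omega, by rw [abs_neg]; omega⟩, ⟨by omega, by omega⟩,
      ⟨by omega, by omega⟩, by omega, hij, by rw [hw.1 j]; omega, by omega⟩
  · -- [-1,-2] : triple (-j, -i, j)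
    obtain ⟨i, j, hi, hij, hj, hiso, hs1, hs2⟩ := extract2 h
    have ei : |i| = i := abs_of_pos (by omega)
    have ej : |j| = j := abs_of_pos (by omega)
    have hwi : w i < 0 := sign_neg (by norm_num) hs1
    have hwj : w j < 0 := sign_neg (by norm_num) hs2
    have habs : |w i| < |w j| := hiso.mpr (by norm_num)
    have e1 : |w i| = -w i := abs_of_neg hwi
    have e2 : |w j| = -w j := abs_of_neg hwj
    exact ⟨-j, -i, j, ⟨by omega, by rw [abs_neg]; omega⟩, ⟨by omega, by rw [abs_neg]; omega⟩,
      ⟨by omega, by omega⟩, by omega, by omega,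
      by rw [hw.1 j, hw.1 i]; omega, by rw [hw.1 i]; omega⟩
  · -- [3,2,1] : triple (i,j,k)
    obtain ⟨i, j, k, hi, hij, hjk, hk, h12, h23, h13, hs1, hs2, hs3⟩ := extract3 h
    have ei : |i| = i := abs_of_pos (by omega)
    have ej : |j| = j := abs_of_pos (by omega)
    have ek : |k| = k := abs_of_pos (by omega)
    have hwi : 0 < w i := sign_pos (by norm_num) hs1
    have hwj : 0 < w j := sign_pos (by norm_num) hs2
    have hwk : 0 < w k := sign_pos (by norm_num) hs3
    have a12 : ¬ (|w i| < |w j|) := by rw [h12]; norm_num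
    have a23 : ¬ (|w j| < |w k|) := by rw [h23]; norm_num
    have e1 : |w i| = w i := abs_of_pos hwi
    have e2 : |w j| = w j := abs_of_pos hwj
    have e3 : |w k| = w k := abs_of_pos hwk
    have hne12 : |w i| ≠ |w j| := abs_ne hw (by omega) (by omega) (by omega)
    have hne23 : |w j| ≠ |w k| := abs_ne hw (by omega) (by omega) (by omega)
    exact ⟨i, j, k, ⟨by omega, by omega⟩, ⟨by omega, by omega⟩, ⟨by omega, by omega⟩,
      hij, hjk, by omega, by omega⟩
  · -- [3,2,-1] : triple (i,j,k)
    obtain ⟨i, j, k, hi, hij, hjk, hk, h12, h23, h13, hs1, hs2, hs3⟩ := extract3 h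
    have ei : |i| = i := abs_of_pos (by omega)
    have ej : |j| = j := abs_of_pos (by omega)
    have ek : |k| = k := abs_of_pos (by omega)
    have hwi : 0 < w i := sign_pos (by norm_num) hs1
    have hwj : 0 < w j := sign_pos (by norm_num) hs2
    have hwk : w k < 0 := sign_neg (by norm_num) hs3
    have a12 : ¬ (|w i| < |w j|) := by rw [h12]; norm_num
    have e1 : |w i| = w i := abs_of_pos hwi
    have e2 : |w j| = w j := abs_of_pos hwj
    have hne12 : |w i| ≠ |w j| := abs_ne hw (by omega) (by omega) (by omega)
    exact ⟨i, j, k, ⟨by omega, by omega⟩, ⟨by omega, by omega⟩, ⟨by omega, by omega⟩,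
      hij, hjk, by omega, by omega⟩
  · -- [-3,2,1] : triple (-i,j,k)
    obtain ⟨i, j, k, hi, hij, hjk, hk, h12, h23, h13, hs1, hs2, hs3⟩ := extract3 h
    have ei : |i| = i := abs_of_pos (by omega)
    have ej : |j| = j := abs_of_pos (by omega)
    have ek : |k| = k := abs_of_pos (by omega)
    have hwi : w i < 0 := sign_neg (by norm_num) hs1
    have hwj : 0 < w j := sign_pos (by norm_num) hs2
    have hwk : 0 < w k := sign_pos (by norm_num) hs3
    have a12' : ¬ (|w i| < |w j|) := by rw [h12]; norm_num
    have hne12 : |w i| ≠ |w j| := abs_ne hw (by omega) (by omega) (by omega)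
    have a12 : |w j| < |w i| := by omega
    have a23 : ¬ (|w j| < |w k|) := by rw [h23]; norm_num
    have hne23 : |w j| ≠ |w k| := abs_ne hw (by omega) (by omega) (by omega)
    have e1 : |w i| = -w i := abs_of_neg hwi
    have e2 : |w j| = w j := abs_of_pos hwj
    have e3 : |w k| = w k := abs_of_pos hwk
    exact ⟨-i, j, k, ⟨by omega, by rw [abs_neg]; omega⟩, ⟨by omega, by omega⟩,
      ⟨by omega, by omega⟩, by omega, hjk, by rw [hw.1 i]; omega, by omega⟩
  · -- [-3,2,-1] : triple (-i,j,k)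
    obtain ⟨i, j, k, hi, hij, hjk, hk, h12, h23, h13, hs1, hs2, hs3⟩ := extract3 h
    have ei : |i| = i := abs_of_pos (by omega)
    have ej : |j| = j := abs_of_pos (by omega)
    have ek : |k| = k := abs_of_pos (by omega)
    have hwi : w i < 0 := sign_neg (by norm_num) hs1
    have hwj : 0 < w j := sign_pos (by norm_num) hs2
    have hwk : w k < 0 := sign_neg (by norm_num) hs3
    have a12' : ¬ (|w i| < |w j|) := by rw [h12]; norm_num
    have hne12 : |w i| ≠ |w j| := abs_ne hw (by omega) (by omega) (by omega)
    have a12 : |w j| < |w i| := by omega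
    have e1 : |w i| = -w i := abs_of_neg hwi
    have e2 : |w j| = w j := abs_of_pos hwj
    exact ⟨-i, j, k, ⟨by omega, by rw [abs_neg]; omega⟩, ⟨by omega, by omega⟩,
      ⟨by omega, by omega⟩, by omega, hjk, by rw [hw.1 i]; omega, by omega⟩

lemma forward_pos {n : ℕ} {w : Equiv.Perm ℤ} (hw : IsSignedPerm n w)
    {i j k : ℤ} (hui : Unfrozen n i) (huk : Unfrozen n k)
    (hij : i < j) (hjk : j < k) (hj : 0 < j) (hjn : j ≤ (n : ℤ))
    (hwij : w j < w i) (hwjk : w k < w j) :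
    ClassicallyContains n w [1, -2] ∨ ClassicallyContains n w [-1, -2] ∨
      ClassicallyContains n w [3, 2, 1] ∨ ClassicallyContains n w [3, 2, -1] ∨
      ClassicallyContains n w [-3, 2, 1] ∨ ClassicallyContains n w [-3, 2, -1] := by
  have hk0 : 0 < k := by omega
  have hkn : k ≤ (n : ℤ) := by have := huk.2; rwa [abs_of_pos hk0] at this
  have hwj0 : w j ≠ 0 := wne0 hw (by omega)
  have hwk0 : w k ≠ 0 := wne0 hw (by omega)
  rcases hwj0.lt_or_gt with hwjneg | hwjpos
  · -- w j < 0, also w k < w j < 0 : pattern [-1,-2] on (j,k)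
    refine Or.inr (Or.inl (cc_two n w (-1) (-2) j k (by omega) hjk hkn ?_ (by norm_num)
      (by nlinarith) (by nlinarith)))
    rw [abs_of_neg hwjneg, abs_of_neg (by omega : w k < 0)]
    omega
  · -- 0 < w j
    rcases lt_or_gt_of_ne hui.1 with hineg | hipos
    · -- i < 0 : use i' = -i
      have hi'n : -i ≤ (n : ℤ) := by have := hui.2; rwa [abs_of_neg hineg] at this
      have hwi' : w (-i) = -(w i) := hw.1 i
      have hwipos : 0 < w i := by omega
      have hwi'neg : w (-i) < 0 := by omega
      rcases lt_trichotomy (-i) j with hlt | heq | hgt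
      · -- -i < j < k
        rcases hwk0.lt_or_gt with hwkneg | hwkpos
        · -- w k < 0
          have hne : |w j| ≠ |w k| := abs_ne hw hj hk0 (by omega)
          rcases lt_or_gt_of_ne hne with hlt2 | hgt2
          · -- |w j| < |w k| : pattern [1,-2] on (j,k)
            exact Or.inl (cc_two n w 1 (-2) j k (by omega) hjk hkn hlt2 (by norm_num)
              (by nlinarith) (by nlinarith))
          · -- |w k| < |w j| : pattern [-3,2,-1] on (-i,j,k)
            refine Or.inr (Or.inr (Or.inr (Or.inr (Or.inr
              (cc_three n w (-3) 2 (-1) (-i) j k (by omega) hlt hjk hkn ?_ (by omega)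
                (by norm_num) (by norm_num) (by nlinarith) (by nlinarith) (by nlinarith))))))
            rw [abs_of_pos hwjpos, abs_of_neg hwi'neg]
            omega
        · -- 0 < w k : pattern [-3,2,1] on (-i,j,k)
          refine Or.inr (Or.inr (Or.inr (Or.inr (Or.inl
            (cc_three n w (-3) 2 1 (-i) j k (by omega) hlt hjk hkn ?_ ?_
              (by norm_num) (by norm_num) (by nlinarith) (by nlinarith) (by nlinarith))))))
          · rw [abs_of_pos hwjpos, abs_of_neg hwi'neg]; omega
          · rw [abs_of_pos hwjpos, abs_of_pos hwkpos]; omega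
      · -- -i = j : impossible
        exfalso; rw [heq] at hwi'neg; omega
      · -- j < -i : pattern [1,-2] on (j, -i)
        refine Or.inl (cc_two n w 1 (-2) j (-i) (by omega) hgt hi'n ?_ (by norm_num)
          (by nlinarith) (by nlinarith))
        rw [abs_of_pos hwjpos, abs_of_neg hwi'neg]
        omega
    · -- 0 < i : positive triple i < j < k
      rcases hwk0.lt_or_gt with hwkneg | hwkpos
      · -- w k < 0
        have hne : |w j| ≠ |w k| := abs_ne hw hj hk0 (by omega)
        rcases lt_or_gt_of_ne hne with hlt2 | hgt2
        · -- |w j| < |w k| : pattern [1,-2] on (j,k)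
          exact Or.inl (cc_two n w 1 (-2) j k (by omega) hjk hkn hlt2 (by norm_num)
            (by nlinarith) (by nlinarith))
        · -- |w k| < |w j| : pattern [3,2,-1] on (i,j,k)
          refine Or.inr (Or.inr (Or.inr (Or.inl
            (cc_three n w 3 2 (-1) i j k (by omega) hij hjk hkn ?_ (by omega)
              (by norm_num) (by norm_num) (by nlinarith) (by nlinarith) (by nlinarith)))))
          rw [abs_of_pos hwjpos, abs_of_pos (by omega : (0:ℤ) < w i)]
          omega
      · -- 0 < w k : pattern [3,2,1] on (i,j,k)
        refine Or.inr (Or.inr (Or.inl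
          (cc_three n w 3 2 1 i j k (by omega) hij hjk hkn ?_ ?_
            (by norm_num) (by norm_num) (by nlinarith) (by nlinarith) (by nlinarith))))
        · rw [abs_of_pos hwjpos, abs_of_pos (by omega : (0:ℤ) < w i)]; omega
        · rw [abs_of_pos hwjpos, abs_of_pos hwkpos]; omega

theorem stmt_15 (n : ℕ) (hn : 1 ≤ n) (w : Equiv.Perm ℤ) (hw : IsSignedPerm n w) :
    GloballyContains321 n w ↔
      ClassicallyContains n w [1, -2] ∨ ClassicallyContains n w [-1, -2] ∨
      ClassicallyContains n w [3, 2, 1] ∨ ClassicallyContains n w [3, 2, -1] ∨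
      ClassicallyContains n w [-3, 2, 1] ∨ ClassicallyContains n w [-3, 2, -1] := by
  constructor
  · rintro ⟨i, j, k, hui, huj, huk, hij, hjk, h1, h2⟩
    rcases lt_trichotomy j 0 with hj | hj | hj
    · have huk' : Unfrozen n (-k) := ⟨by have := huk.1; omega, by rw [abs_neg]; exact huk.2⟩
      have hui' : Unfrozen n (-i) := ⟨by have := hui.1; omega, by rw [abs_neg]; exact hui.2⟩
      refine forward_pos (j := -j) hw huk' hui' (by omega) (by omega) (by omega)
        (by have := huj.2; rw [abs_of_neg hj] at this; omega) ?_ ?_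
      · rw [hw.1 j, hw.1 k]; omega
      · rw [hw.1 j, hw.1 i]; omega
    · exact absurd hj huj.1
    · exact forward_pos hw hui huk hij hjk hj
        (by have := huj.2; rw [abs_of_pos hj] at this; omega) h1 h2
  · exact backward hw

end Stmt15
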